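/- arXiv:2507.14653 — 5 statements merged into one kernel-verified Lean document; each statement's English description precedes it below -/
import Mathlib

section
/- Let V be continuously differentiable and suppose the feedback controlled system satisfies ∇V(x)·f(x, u(x)) ≤ -V(x) for all x. If the event function h(x,e) = ∇V(x)·(f(x, u(x+e)) - f(x, u(x))) - σV(x) with 0 < σ < 1 satisfies h(x(t), e(t)) ≤ 0 on an inter-event interval, then along the event-triggered trajectory ∇V(x(t))·f(x(t), u(x(t)+e(t))) ≤ -(1-σ)V(x(t)), and consequently V(x(t)) ≤ V(x(t_k)) e^{-(1-σ)(t - t_k)} for t ∈ [t_k, t_{k+1}). -/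
open Real Set

/-- On an inter-event interval, if the feedback Lyapunov condition
`⟪∇V, f(x,u(x))⟫ ≤ -V` holds and the event function
`h(x,e) = ⟪∇V(x), f(x,u(x+e)) - f(x,u(x))⟫ - σ V(x)` stays nonpositive,
then `⟪∇V(x(t)), f(x(t), u(x(t)+e(t)))⟫ ≤ -(1-σ) V(x(t))` and
`V(x(t)) ≤ V(x(t_k)) exp(-(1-σ)(t-t_k))`. -/
theorem stmt_1 {d m : ℕ}
    (f : EuclideanSpace ℝ (Fin d) → EuclideanSpace ℝ (Fin m) → EuclideanSpace ℝ (Fin d))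
    (u : EuclideanSpace ℝ (Fin d) → EuclideanSpace ℝ (Fin m))
    (V : EuclideanSpace ℝ (Fin d) → ℝ) (hV : ContDiff ℝ 1 V) (hVnn : ∀ y, 0 ≤ V y)
    (σ : ℝ) (hσ : 0 < σ) (hσ1 : σ < 1)
    (hfb : ∀ y, (inner ℝ (gradient V y) (f y (u y)) : ℝ) ≤ -V y)
    (tk tk1 : ℝ) (htk : tk < tk1)
    (x e : ℝ → EuclideanSpace ℝ (Fin d))
    (hetk : e tk = 0)
    (he : ∀ t ∈ Ico tk tk1, e t = x tk - x t)
    (hxode : ∀ t ∈ Ico tk tk1, HasDerivAt x (f (x t) (u (x t + e t))) t)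
    (hevent : ∀ t ∈ Ico tk tk1,
      (inner ℝ (gradient V (x t)) (f (x t) (u (x t + e t)) - f (x t) (u (x t))) : ℝ)
        - σ * V (x t) ≤ 0) :
    ∀ t ∈ Ico tk tk1,
      (inner ℝ (gradient V (x t)) (f (x t) (u (x t + e t))) : ℝ) ≤ -(1 - σ) * V (x t) ∧
      V (x t) ≤ V (x tk) * Real.exp (-(1 - σ) * (t - tk)) := by

  have key : ∀ t ∈ Ico tk tk1,
      (inner ℝ (gradient V (x t)) (f (x t) (u (x t + e t))) : ℝ) ≤ -(1 - σ) * V (x t) := by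
    intro t ht
    have h1 := hevent t ht
    have h2 := hfb (x t)
    have hdec : (inner ℝ (gradient V (x t)) (f (x t) (u (x t + e t))) : ℝ)
        = (inner ℝ (gradient V (x t)) (f (x t) (u (x t + e t)) - f (x t) (u (x t))) : ℝ)
          + (inner ℝ (gradient V (x t)) (f (x t) (u (x t))) : ℝ) := by
      rw [inner_sub_right]; ring
    rw [hdec]; nlinarith [hVnn (x t)]
  have hVx : ∀ s ∈ Ico tk tk1, HasDerivAt (fun τ => V (x τ))
      (inner ℝ (gradient V (x s)) (f (x s) (u (x s + e s))) : ℝ) s := by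
    intro s hs
    have hg : HasGradientAt V (gradient V (x s)) (x s) :=
      ((hV.differentiable one_ne_zero) (x s)).hasGradientAt
    have hf := hg.hasFDerivAt.comp_hasDerivAt s (hxode s hs)
    simpa using (show HasDerivAt (fun τ => V (x τ)) _ s from hf)
  have hφ : ∀ s ∈ Ico tk tk1,
      HasDerivAt (fun τ => V (x τ) * Real.exp ((1 - σ) * (τ - tk)))
        ((inner ℝ (gradient V (x s)) (f (x s) (u (x s + e s))) : ℝ)
            * Real.exp ((1 - σ) * (s - tk))
          + V (x s) * (Real.exp ((1 - σ) * (s - tk)) * (1 - σ))) s := by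
    intro s hs
    have hexp : HasDerivAt (fun τ => Real.exp ((1 - σ) * (τ - tk)))
        (Real.exp ((1 - σ) * (s - tk)) * (1 - σ)) s := by
      have : HasDerivAt (fun τ => (1 - σ) * (τ - tk)) (1 - σ) s := by
        simpa using (((hasDerivAt_id s).sub_const tk).const_mul (1 - σ))
      simpa using this.exp
    exact (hVx s hs).mul hexp
  have hmono : ∀ t ∈ Ico tk tk1,
      V (x t) * Real.exp ((1 - σ) * (t - tk)) ≤ V (x tk) := by
    intro t ht
    rcases eq_or_lt_of_le ht.1 with rfl | hlt
    · simp
    have hsub : Icc tk t ⊆ Ico tk tk1 := fun s hs => ⟨hs.1, lt_of_le_of_lt hs.2 ht.2⟩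
    have hcont : ContinuousOn (fun τ => V (x τ) * Real.exp ((1 - σ) * (τ - tk))) (Icc tk t) :=
      fun s hs => ((hφ s (hsub hs)).continuousAt).continuousWithinAt
    have hint : interior (Icc tk t) = Ioo tk t := interior_Icc
    have hdiff : DifferentiableOn ℝ (fun τ => V (x τ) * Real.exp ((1 - σ) * (τ - tk)))
        (interior (Icc tk t)) := by
      rw [hint]
      intro s hs
      exact ((hφ s (hsub (Ioo_subset_Icc_self hs))).differentiableAt).differentiableWithinAt
    have hderiv : ∀ s ∈ interior (Icc tk t),
        deriv (fun τ => V (x τ) * Real.exp ((1 - σ) * (τ - tk))) s ≤ 0 := by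
      rw [hint]
      intro s hs
      have hs' : s ∈ Ico tk tk1 := hsub (Ioo_subset_Icc_self hs)
      rw [(hφ s hs').deriv]
      have hk := key s hs'
      have hE := Real.exp_pos ((1 - σ) * (s - tk))
      nlinarith [hVnn (x s)]
    have hA := antitoneOn_of_deriv_nonpos (convex_Icc tk t) hcont hdiff hderiv
    have := hA (left_mem_Icc.2 hlt.le) (right_mem_Icc.2 hlt.le) hlt.le
    simpa using this
  intro t ht
  refine ⟨key t ht, ?_⟩
  have h2 : V (x t) ≤ V (x tk) / Real.exp ((1 - σ) * (t - tk)) :=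
    (le_div_iff₀ (Real.exp_pos _)).2 (hmono t ht)
  calc V (x t) ≤ V (x tk) / Real.exp ((1 - σ) * (t - tk)) := h2
    _ = V (x tk) * Real.exp (-(1 - σ) * (t - tk)) := by
        rw [show -(1 - σ) * (t - tk) = -((1 - σ) * (t - tk)) by ring, Real.exp_neg,
          div_eq_mul_inv]
end

section
/- Suppose ‖f(x, u(x+e))‖ ≤ l_f‖x‖ + l_f l_u(‖x‖ + ‖e‖) for all x ≠ 0 and e, where l_f, l_u > 0. If ẋ = f(x, u(x+e)) and ė = -ẋ, then z = ‖e‖/‖x‖ satisfies ż ≤ (l_f(1 + l_u) + l_f l_u z)(1 + z) wherever x ≠ 0. -/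
open RealInnerProductSpace

lemma hasDerivAt_norm_aux {F : Type*} [NormedAddCommGroup F] [InnerProductSpace ℝ F]
    {g : ℝ → F} {g' : F} {t : ℝ} (hg : HasDerivAt g g' t) (h0 : g t ≠ 0) :
    HasDerivAt (fun s => ‖g s‖) (⟪g t, g'⟫ / ‖g t‖) t := by
  have h2 : HasDerivAt (fun s => ‖g s‖ ^ 2) (2 * ⟪g t, g'⟫) t := hg.norm_sq
  have hn : ‖g t‖ ≠ 0 := norm_ne_zero_iff.mpr h0
  have hne : (‖g t‖ ^ 2 : ℝ) ≠ 0 := pow_ne_zero 2 hn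
  have h3 := (Real.hasDerivAt_sqrt hne).comp t h2
  have heq : (Real.sqrt ∘ fun s => ‖g s‖ ^ 2) = fun s => ‖g s‖ := by
    funext s; simp [Real.sqrt_sq (norm_nonneg _)]
  rw [heq] at h3
  refine h3.congr_deriv ?_
  rw [Real.sqrt_sq (norm_nonneg _)]
  field_simp

/-- If `‖f(x, u(x+e))‖ ≤ l_f‖x‖ + l_f l_u (‖x‖+‖e‖)`, `ẋ = f(x,u(x+e))` and `ė = -ẋ`,
then `z = ‖e‖/‖x‖` satisfies `ż ≤ (l_f(1+l_u) + l_f l_u z)(1+z)` wherever `x ≠ 0`. -/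
theorem stmt_3 {d m : ℕ}
    (f : EuclideanSpace ℝ (Fin d) → EuclideanSpace ℝ (Fin m) → EuclideanSpace ℝ (Fin d))
    (u : EuclideanSpace ℝ (Fin d) → EuclideanSpace ℝ (Fin m))
    (lf lu : ℝ) (hlf : 0 < lf) (hlu : 0 < lu)
    (hbound : ∀ (y : EuclideanSpace ℝ (Fin d)), y ≠ 0 → ∀ (w : EuclideanSpace ℝ (Fin d)),
      ‖f y (u (y + w))‖ ≤ lf * ‖y‖ + lf * lu * (‖y‖ + ‖w‖))
    (x e : ℝ → EuclideanSpace ℝ (Fin d))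
    (hx : ∀ t, HasDerivAt x (f (x t) (u (x t + e t))) t)
    (he : ∀ t, HasDerivAt e (-(f (x t) (u (x t + e t)))) t)
    (t : ℝ) (hxt : x t ≠ 0) (het : e t ≠ 0)
    (zd : ℝ) (hz : HasDerivAt (fun s => ‖e s‖ / ‖x s‖) zd t) :
    zd ≤ (lf * (1 + lu) + lf * lu * (‖e t‖ / ‖x t‖)) * (1 + ‖e t‖ / ‖x t‖) := by
  set F := f (x t) (u (x t + e t)) with hF
  set a := ‖x t‖ with ha
  set b := ‖e t‖ with hb
  have hapos : 0 < a := norm_pos_iff.mpr hxt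
  have hbpos : 0 < b := norm_pos_iff.mpr het
  have hdx : HasDerivAt (fun s => ‖x s‖) (⟪x t, F⟫ / a) t :=
    hasDerivAt_norm_aux (hx t) hxt
  have hde : HasDerivAt (fun s => ‖e s‖) (⟪e t, -F⟫ / b) t :=
    hasDerivAt_norm_aux (he t) het
  have hdiv := hde.div hdx hapos.ne'
  have hzd : zd = (⟪e t, -F⟫ / b * a - b * (⟪x t, F⟫ / a)) / a ^ 2 := hz.unique hdiv
  set N := ‖F‖ with hN
  have hNnn : 0 ≤ N := norm_nonneg _
  have hce : ⟪e t, -F⟫ ≤ b * N := by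
    calc ⟪e t, -F⟫ ≤ ‖e t‖ * ‖-F‖ := real_inner_le_norm _ _
    _ = b * N := by rw [norm_neg]
  have hcx : -⟪x t, F⟫ ≤ a * N := by
    have := abs_real_inner_le_norm (x t) F
    have h2 := neg_le_of_abs_le this
    linarith
  -- zd ≤ N/a * (1 + b/a)
  have key : zd ≤ N / a * (1 + b / a) := by
    rw [hzd]
    rw [div_le_iff₀ (by positivity : (0:ℝ) < a ^ 2)]
    have h1 : ⟪e t, -F⟫ / b * a ≤ N * a := by
      rw [div_mul_eq_mul_div, div_le_iff₀ hbpos]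
      calc ⟪e t, -F⟫ * a ≤ (b * N) * a := by nlinarith
      _ = N * a * b := by ring
    have h2 : -(b * (⟪x t, F⟫ / a)) ≤ b * N := by
      rw [neg_mul_eq_mul_neg]
      have : -(⟪x t, F⟫ / a) ≤ N := by
        rw [neg_le, le_div_iff₀ hapos]
        nlinarith
      nlinarith
    have hgoal : N / a * (1 + b / a) * a ^ 2 = N * a + b * N := by
      field_simp
    rw [hgoal]; linarith
  have hNb : N / a ≤ lf * (1 + lu) + lf * lu * (b / a) := by
    have hb1 := hbound (x t) hxt (e t)
    rw [div_le_iff₀ hapos]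
    have : (lf * (1 + lu) + lf * lu * (b / a)) * a = lf * a + lf * lu * (a + b) := by
      field_simp; ring
    rw [this]
    exact hb1
  have h1z : (0:ℝ) ≤ 1 + b / a := by positivity
  calc zd ≤ N / a * (1 + b / a) := key
  _ ≤ (lf * (1 + lu) + lf * lu * (b / a)) * (1 + b / a) := by
    exact mul_le_mul_of_nonneg_right hNb h1z
end

section
/- Consider the event-triggered controlled system ẋ = f(x, u(x(t_k))) on [t_k, t_{k+1}) with error e(t) = x(t_k) - x(t). Assume (i) ‖f(x',u') - f(x,u)‖ ≤ l_f(‖x'-x‖ + ‖u'-u‖), (ii) ‖u(x') - u(x)‖ ≤ l_u‖x'-x‖, (iii) there exist class-K functions α, γ with α⁻¹(γ(s)) ≤ P·s for all s ≥ 0. Then under the triggering rule defined by the event function h = α(‖x‖) - γ(‖e‖) (events triggered when h = 0 starting from e = 0), the inter-event times t_{k+1} - t_k are bounded below by τ_h = (1/l_f) · log((P+1)/(P + l_u/(1+l_u))). -/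
open Real Set Filter Topology

/-- A class-K function: continuous, strictly increasing on `[0,∞)`, vanishing at `0`. -/
def IsClassK (α : ℝ → ℝ) : Prop :=
  ContinuousOn α (Ici 0) ∧ StrictMonoOn α (Ici 0) ∧ α 0 = 0

set_option maxHeartbeats 2000000 in
/-- Lower bound on the inter-event time for the event function
`h = α(‖x‖) - γ(‖e‖)`: under joint Lipschitzness of `f` (constant `l_f`),
Lipschitzness of `u` (constant `l_u`), and `α⁻¹∘γ ≤ P·id`, the inter-event
time is at least `τ_h = (1/l_f) log((P+1)/(P + l_u/(1+l_u)))`. -/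
theorem stmt_6 {d m : ℕ}
    (f : EuclideanSpace ℝ (Fin d) → EuclideanSpace ℝ (Fin m) → EuclideanSpace ℝ (Fin d))
    (u : EuclideanSpace ℝ (Fin d) → EuclideanSpace ℝ (Fin m))
    (lf lu P : ℝ) (hlf : 0 < lf) (hlu : 0 < lu) (hP : 0 < P)
    (hfLip : ∀ y y' v v', ‖f y' v' - f y v‖ ≤ lf * (‖y' - y‖ + ‖v' - v‖))
    (huLip : ∀ y y', ‖u y' - u y‖ ≤ lu * ‖y' - y‖)
    (hf0 : f 0 (u 0) = 0) (hu0 : u 0 = 0)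
    (α γ : ℝ → ℝ) (hα : IsClassK α) (hγ : IsClassK γ)
    (hcomp : ∀ s : ℝ, 0 ≤ s → γ s ≤ α (P * s))
    (tk tk1 : ℝ) (htk : tk < tk1)
    (x : ℝ → EuclideanSpace ℝ (Fin d)) (hxtk : x tk ≠ 0)
    (hxode : ∀ t ∈ Icc tk tk1, HasDerivAt x (f (x t) (u (x tk))) t)
    -- before the event, `h = α(‖x‖) - γ(‖e‖) > 0`
    (hpre : ∀ t ∈ Ico tk tk1, γ ‖x tk - x t‖ < α ‖x t‖)
    -- the event is triggered at `tk1`, i.e. `h = 0`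
    (htrig : γ ‖x tk - x tk1‖ = α ‖x tk1‖) :
    (1 / lf) * Real.log ((P + 1) / (P + lu / (1 + lu))) ≤ tk1 - tk := by
  obtain ⟨hαc, hαm, hα0⟩ := hα
  obtain ⟨hγc, hγm, hγ0⟩ := hγ
  by_contra hcon
  push_neg at hcon
  have hlu1 : (0:ℝ) < 1 + lu := by linarith
  have hb : 0 < ‖x tk‖ := norm_pos_iff.2 hxtk
  set R : ℝ := (P + 1) / (P + lu / (1 + lu)) with hRdef
  set τ : ℝ := 1 / lf * Real.log R with hτdef
  set T : ℝ := tk1 - tk with hTdef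
  have hT : 0 < T := sub_pos.2 htk
  have hden : 0 < P + lu / (1 + lu) := by positivity
  have hR1 : 1 < R := by
    rw [hRdef, lt_div_iff₀ hden]
    have : lu / (1 + lu) < 1 := (div_lt_one hlu1).2 (by linarith)
    linarith
  have hR0 : 0 < R := lt_trans one_pos hR1
  have hlfτ : lf * τ = Real.log R := by
    rw [hτdef]; field_simp
  set ε : ℝ := (τ - T) / (2 * T) with hεdef
  have hε : 0 < ε := div_pos (by linarith) (by linarith)
  set k : ℝ := lf * (1 + ε) with hkdef
  have hk : 0 < k := by
    rw [hkdef]; positivity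
  have hkT : k * T < Real.log R := by
    have h1 : (1 + ε) * T = (τ + T) / 2 := by
      rw [hεdef]; field_simp; ring
    have h2 : k * T = lf * ((1 + ε) * T) := by rw [hkdef]; ring
    rw [h2, h1, ← hlfτ]
    nlinarith
  have hγmono := hγm.monotoneOn
  -- positivity of ‖x t‖ on [tk, tk1]
  have hq : ∀ t ∈ Icc tk tk1, 0 < ‖x t‖ := by
    intro t ht
    rcases eq_or_lt_of_le (norm_nonneg (x t)) with h0 | h0
    · exfalso
      rcases eq_or_lt_of_le ht.2 with h2 | h2
      · subst h2
        have hx0 : x t = 0 := norm_eq_zero.1 h0.symm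
        rw [hx0, sub_zero, norm_zero, hα0] at htrig
        have : γ 0 < γ ‖x tk‖ :=
          hγm (mem_Ici.2 le_rfl) (mem_Ici.2 (norm_nonneg _)) hb
        rw [hγ0] at this
        linarith [htrig]
      · have hp := hpre t ⟨ht.1, h2⟩
        have h1 : γ 0 ≤ γ ‖x tk - x t‖ :=
          hγmono (mem_Ici.2 le_rfl) (mem_Ici.2 (norm_nonneg _)) (norm_nonneg _)
        rw [hγ0] at h1
        rw [← h0, hα0] at hp
        linarith
    · exact h0
  have htk1m : tk1 ∈ Icc tk tk1 := right_mem_Icc.2 htk.le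
  have hqk1 : 0 < ‖x tk1‖ := hq tk1 htk1m
  -- at the event: ‖x tk1‖ ≤ P ‖e tk1‖
  have hfin : ‖x tk1‖ ≤ P * ‖x tk - x tk1‖ := by
    by_contra hlt
    push_neg at hlt
    have h1 : α (P * ‖x tk - x tk1‖) < α ‖x tk1‖ :=
      hαm (mem_Ici.2 (by positivity)) (mem_Ici.2 (norm_nonneg _)) hlt
    have h2 := hcomp ‖x tk - x tk1‖ (norm_nonneg _)
    rw [htrig] at h2
    linarith
  -- bound on the vector field
  have hdb : ∀ t ∈ Icc tk tk1,
      ‖f (x t) (u (x tk))‖ ≤ lf * (lu * ‖x tk - x t‖ + (1 + lu) * ‖x t‖) := by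
    intro t ht
    have h1 : ‖f (x t) (u (x tk)) - f 0 (u 0)‖ ≤ lf * (‖x t - 0‖ + ‖u (x tk) - u 0‖) :=
      hfLip 0 (x t) (u 0) (u (x tk))
    rw [hf0, sub_zero, sub_zero] at h1
    have h2 : ‖u (x tk) - u 0‖ ≤ lu * ‖x tk - 0‖ := huLip 0 (x tk)
    rw [sub_zero] at h2
    have h3 : ‖x tk‖ ≤ ‖x tk - x t‖ + ‖x t‖ := by
      calc ‖x tk‖ = ‖x tk - x t + x t‖ := by rw [sub_add_cancel]
        _ ≤ ‖x tk - x t‖ + ‖x t‖ := norm_add_le _ _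
    have h4 : lu * ‖x tk‖ ≤ lu * (‖x tk - x t‖ + ‖x t‖) :=
      mul_le_mul_of_nonneg_left h3 hlu.le
    have h5 : ‖x t‖ + ‖u (x tk) - u 0‖ ≤ lu * ‖x tk - x t‖ + (1 + lu) * ‖x t‖ := by
      nlinarith
    calc ‖f (x t) (u (x tk))‖ ≤ lf * (‖x t‖ + ‖u (x tk) - u 0‖) := h1
      _ ≤ lf * (lu * ‖x tk - x t‖ + (1 + lu) * ‖x t‖) :=
        mul_le_mul_of_nonneg_left h5 hlf.le
  -- the ratio function z = ‖e‖/‖x‖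
  set z : ℝ → ℝ := fun t => ‖x tk - x t‖ / ‖x t‖ with hzdef
  have hxc : ContinuousOn x (Icc tk tk1) := fun t ht =>
    (hxode t ht).continuousAt.continuousWithinAt
  have hzc : ContinuousOn z (Icc tk tk1) :=
    ((continuousOn_const.sub hxc).norm).div hxc.norm (fun t ht => (hq t ht).ne')
  have hznn : ∀ t, 0 ≤ z t := fun t => div_nonneg (norm_nonneg _) (norm_nonneg _)
  -- comparison solution
  set E : ℝ → ℝ := fun t => Real.exp (k * (t - tk)) with hEdef
  set Dn : ℝ → ℝ := fun t => (1 + lu) - lu * E t with hDndef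
  set B : ℝ → ℝ := fun t => (1 + lu) * (E t - 1) / Dn t with hBdef
  set B' : ℝ → ℝ := fun t => lf * (1 + ε) * ((lu * B t + (1 + lu)) * (1 + B t)) with hB'def
  have hER : ∀ t ∈ Icc tk tk1, E t < R := by
    intro t ht
    have h1 : k * (t - tk) ≤ k * T := mul_le_mul_of_nonneg_left (by
      rw [hTdef]; linarith [ht.2]) hk.le
    calc E t ≤ Real.exp (k * T) := Real.exp_le_exp.2 h1
      _ < Real.exp (Real.log R) := Real.exp_lt_exp.2 hkT
      _ = R := Real.exp_log hR0
  have hRlu : lu * R < 1 + lu := by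
    rw [hRdef, ← mul_div_assoc, div_lt_iff₀ hden]
    have he : (1 + lu) * (P + lu / (1 + lu)) = (1 + lu) * P + lu := by
      field_simp
    rw [he]
    nlinarith
  have hDpos : ∀ t ∈ Icc tk tk1, 0 < Dn t := by
    intro t ht
    have h1 : lu * E t < lu * R := mul_lt_mul_of_pos_left (hER t ht) hlu
    simp only [hDndef]
    linarith
  have hBd : ∀ t ∈ Icc tk tk1, HasDerivAt B (B' t) t := by
    intro t ht
    have hD := (hDpos t ht).ne'
    have hD2 : (1 + lu) - lu * Real.exp (k * (t - tk)) ≠ 0 := hD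
    have he1 : HasDerivAt (fun s : ℝ => k * (s - tk)) k t := by
      simpa using ((hasDerivAt_id t).sub_const tk).const_mul k
    have hE1 : HasDerivAt E (Real.exp (k * (t - tk)) * k) t := he1.exp
    have hN : HasDerivAt (fun s => (1 + lu) * (E s - 1))
        ((1 + lu) * (Real.exp (k * (t - tk)) * k)) t := (hE1.sub_const 1).const_mul (1 + lu)
    have hD1 : HasDerivAt Dn (-(lu * (Real.exp (k * (t - tk)) * k))) t :=
      (hE1.const_mul lu).const_sub (1 + lu)
    have hdiv := hN.div hD1 hD
    refine hdiv.congr_deriv ?_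
    simp only [hB'def, hBdef, hDndef, hEdef, hkdef] at hD2 ⊢
    field_simp
    ring
  -- contact bound
  have hcontact : ∀ t ∈ Ico tk tk1, z t = B t →
      lf * ((lu * z t + (1 + lu)) * (1 + z t)) < B' t := by
    intro t ht hzB
    have hz0 := hznn t
    simp only [hB'def, ← hzB]
    have hpos : 0 < (lu * z t + (1 + lu)) * (1 + z t) := by nlinarith [mul_nonneg hlu.le hz0]
    nlinarith [mul_pos hlf (mul_pos hε hpos)]
  -- slope estimate
  have hslope : ∀ t ∈ Ico tk tk1, ∀ r,
      lf * ((lu * z t + (1 + lu)) * (1 + z t)) < r → ∃ᶠ s in 𝓝[>] t, slope z t s < r := by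
    intro t ht r hr
    have htI : t ∈ Icc tk tk1 := Ico_subset_Icc_self ht
    have hqt : 0 < ‖x t‖ := hq t htI
    have hx := hxode t htI
    -- the limit of the majorant
    have hL : ‖f (x t) (u (x tk))‖ * ((‖x tk - x t‖ + ‖x t‖) / (‖x t‖ * ‖x t‖))
        ≤ lf * ((lu * z t + (1 + lu)) * (1 + z t)) := by
      have h1 := hdb t htI
      have h2 : (0:ℝ) ≤ (‖x tk - x t‖ + ‖x t‖) / (‖x t‖ * ‖x t‖) := by positivity
      have h3 : lf * (lu * ‖x tk - x t‖ + (1 + lu) * ‖x t‖)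
            * ((‖x tk - x t‖ + ‖x t‖) / (‖x t‖ * ‖x t‖))
          = lf * ((lu * z t + (1 + lu)) * (1 + z t)) := by
        simp only [hzdef]
        field_simp
        ring
      calc ‖f (x t) (u (x tk))‖ * ((‖x tk - x t‖ + ‖x t‖) / (‖x t‖ * ‖x t‖))
          ≤ lf * (lu * ‖x tk - x t‖ + (1 + lu) * ‖x t‖)
            * ((‖x tk - x t‖ + ‖x t‖) / (‖x t‖ * ‖x t‖)) :=
            mul_le_mul_of_nonneg_right h1 h2
        _ = _ := h3
    have hts : Tendsto (fun s => ‖slope x t s‖) (𝓝[>] t) (𝓝 ‖f (x t) (u (x tk))‖) := by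
      have h1 := hasDerivAt_iff_tendsto_slope.1 hx
      exact (h1.mono_left (nhdsWithin_mono t (fun s hs => ne_of_gt hs))).norm
    have hqs : Tendsto (fun s => ‖x s‖) (𝓝[>] t) (𝓝 ‖x t‖) :=
      (hx.continuousAt.norm).tendsto.mono_left nhdsWithin_le_nhds
    have hG : Tendsto (fun s => ‖slope x t s‖ * ((‖x tk - x t‖ + ‖x t‖) / (‖x s‖ * ‖x t‖)))
        (𝓝[>] t)
        (𝓝 (‖f (x t) (u (x tk))‖ * ((‖x tk - x t‖ + ‖x t‖) / (‖x t‖ * ‖x t‖)))) :=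
      hts.mul (tendsto_const_nhds.div (hqs.mul tendsto_const_nhds) (mul_pos hqt hqt).ne')
    have hGr : ∀ᶠ s in 𝓝[>] t,
        ‖slope x t s‖ * ((‖x tk - x t‖ + ‖x t‖) / (‖x s‖ * ‖x t‖)) < r :=
      hG.eventually_lt_const (lt_of_le_of_lt hL hr)
    have hqpos : ∀ᶠ s in 𝓝[>] t, 0 < ‖x s‖ := hqs.eventually_const_lt hqt
    have hbound : ∀ᶠ s in 𝓝[>] t,
        slope z t s ≤ ‖slope x t s‖ * ((‖x tk - x t‖ + ‖x t‖) / (‖x s‖ * ‖x t‖)) := by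
      filter_upwards [hqpos, self_mem_nhdsWithin] with s hqs0 hs
      have hs' : t < s := hs
      have hst : (0:ℝ) < s - t := sub_pos.2 hs'
      have hsx : ‖slope x t s‖ = ‖x s - x t‖ / (s - t) := by
        rw [slope_def_module, norm_smul, norm_inv, Real.norm_eq_abs, abs_of_pos hst,
          inv_mul_eq_div]
      rw [hsx, slope_def_field, div_mul_eq_mul_div, div_le_div_iff₀ hst hst]
      have t1 : ‖x tk - x s‖ ≤ ‖x tk - x t‖ + ‖x s - x t‖ := by
        have h := norm_add_le (x tk - x t) (x t - x s)
        rw [sub_add_sub_cancel, norm_sub_rev (x t) (x s)] at h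
        exact h
      have t2 : ‖x t‖ - ‖x s‖ ≤ ‖x s - x t‖ := by
        have := norm_sub_norm_le (x t) (x s)
        rw [norm_sub_rev] at this
        linarith
      have e1 : z s - z t = (‖x tk - x s‖ * ‖x t‖ - ‖x tk - x t‖ * ‖x s‖) / (‖x s‖ * ‖x t‖) := by
        simp only [hzdef]
        field_simp
      rw [e1]
      have hnum : ‖x tk - x s‖ * ‖x t‖ - ‖x tk - x t‖ * ‖x s‖
          ≤ ‖x s - x t‖ * (‖x tk - x t‖ + ‖x t‖) := by
        have u1 : ‖x tk - x s‖ * ‖x t‖ ≤ (‖x tk - x t‖ + ‖x s - x t‖) * ‖x t‖ :=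
          mul_le_mul_of_nonneg_right t1 (norm_nonneg _)
        have u2 : ‖x tk - x t‖ * (‖x t‖ - ‖x s‖) ≤ ‖x tk - x t‖ * ‖x s - x t‖ :=
          mul_le_mul_of_nonneg_left t2 (norm_nonneg _)
        nlinarith
      have hDq : (0:ℝ) < ‖x s‖ * ‖x t‖ := mul_pos hqs0 hqt
      calc (‖x tk - x s‖ * ‖x t‖ - ‖x tk - x t‖ * ‖x s‖) / (‖x s‖ * ‖x t‖) * (s - t)
          ≤ ‖x s - x t‖ * (‖x tk - x t‖ + ‖x t‖) / (‖x s‖ * ‖x t‖) * (s - t) := by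
            apply mul_le_mul_of_nonneg_right _ hst.le
            exact (div_le_div_iff_of_pos_right hDq).2 hnum
        _ = ‖x s - x t‖ * ((‖x tk - x t‖ + ‖x t‖) / (‖x s‖ * ‖x t‖)) * (s - t) := by
            ring
    have := (hbound.and hGr).mono fun s hsr => lt_of_le_of_lt hsr.1 hsr.2
    exact this.frequently
  -- initial condition
  have ha0 : z tk ≤ B tk := by
    have h1 : z tk = 0 := by
      simp only [hzdef, sub_self, norm_zero, zero_div]
    have h2 : B tk = 0 := by
      simp only [hBdef, hEdef, sub_self, mul_zero, Real.exp_zero]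
      norm_num
    rw [h1, h2]
  -- apply the fencing theorem
  have key : z tk1 ≤ B tk1 :=
    image_le_of_liminf_slope_right_lt_deriv_boundary'
      (f' := fun t => lf * ((lu * z t + (1 + lu)) * (1 + z t))) (B := B) (B' := B')
      hzc hslope ha0
      (fun t ht => (hBd t ht).continuousAt.continuousWithinAt)
      (fun t ht => (hBd t (Ico_subset_Icc_self ht)).hasDerivWithinAt)
      hcontact htk1m
  have h1 : 1 / P ≤ z tk1 := by
    simp only [hzdef]
    rw [div_le_div_iff₀ hP hqk1]
    nlinarith
  have h2 : B tk1 < 1 / P := by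
    have hE1 := hER tk1 htk1m
    have hD1 := hDpos tk1 htk1m
    have hD1' : 0 < (1 + lu) - lu * E tk1 := hD1
    simp only [hBdef, hDndef]
    rw [div_lt_div_iff₀ hD1' hP]
    have hRe : R * (P * (1 + lu) + lu) = (P + 1) * (1 + lu) := by
      rw [hRdef]
      field_simp
    have hprod : E tk1 * (P * (1 + lu) + lu) < R * (P * (1 + lu) + lu) :=
      mul_lt_mul_of_pos_right hE1 (by positivity)
    nlinarith
  linarith
end

section
/- Under the hypotheses of the inter-event-time theorem, if additionally the state space D is bounded, V is continuously differentiable on D, and ∇V(x)·(f(x, u(x+e)) - f(x, u(x))) ≤ γ(‖e‖) holds for all x ∈ D and all e (equation group condition), then the Lipschitz constant of α⁻¹∘γ is bounded by c·l_{α⁻¹}·l_u where c = max_{x∈D}‖∇V(x)‖·l_f, and consequently the minimal inter-event time for the event function h̃ = ∇V·(f(x,u(x+e)) - f(x,u(x))) - α(‖x‖) is bounded below by τ_{h̃} = (1/l_f)·log((c l_{α⁻¹} l_u + 1)/(c l_{α⁻¹} l_u + l_u/(1+l_u))). -/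
open Real Set Filter Topology

set_option maxHeartbeats 4000000

/-- Monotonicity of `log (A+B) - log (lu*A+(1+lu)*B)` in `A`. -/
lemma phi_mono_A {lu A A' B : ℝ} (hlu : 0 < lu) (hAA : A ≤ A')
    (hB : 0 ≤ B) (hpos : 0 < A + B) :
    Real.log (A + B) - Real.log (lu * A + (1 + lu) * B)
      ≤ Real.log (A' + B) - Real.log (lu * A' + (1 + lu) * B) := by
  have h2 : 0 < A' + B := by linarith
  have h3 : 0 < lu * A + (1 + lu) * B := by nlinarith
  have h4 : 0 < lu * A' + (1 + lu) * B := by nlinarith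
  rw [← Real.log_div h2.ne' h4.ne', ← Real.log_div hpos.ne' h3.ne']
  rw [Real.log_le_log_iff (by positivity) (by positivity), div_le_div_iff₀ h3 h4]
  nlinarith [mul_nonneg (sub_nonneg.2 hAA) hB]

/-- Antitonicity of `log (A+B) - log (lu*A+(1+lu)*B)` in `B`. -/
lemma phi_anti_B {lu A B B' : ℝ} (hlu : 0 < lu) (hA : 0 ≤ A) (hB' : 0 ≤ B')
    (hBB : B' ≤ B) (hpos : 0 < A + B') :
    Real.log (A + B) - Real.log (lu * A + (1 + lu) * B)
      ≤ Real.log (A + B') - Real.log (lu * A + (1 + lu) * B') := by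
  have h2 : 0 < A + B := by linarith
  have h3 : 0 < lu * A + (1 + lu) * B' := by nlinarith
  have h4 : 0 < lu * A + (1 + lu) * B := by nlinarith
  rw [← Real.log_div h2.ne' h4.ne', ← Real.log_div hpos.ne' h3.ne']
  rw [Real.log_le_log_iff (by positivity) (by positivity), div_le_div_iff₀ h4 h3]
  nlinarith [mul_nonneg hA (sub_nonneg.2 hBB)]

/-- On a bounded state space, with `c = max_{x∈D}‖∇V(x)‖·l_f` and `α⁻¹`
Lipschitz with constant `l_{α⁻¹}`, the Lipschitz-type gain of `α⁻¹∘γ` is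
bounded by `c·l_{α⁻¹}·l_u`, and the minimal inter-event time for the event
function `h̃ = ∇V·(f(x,u(x+e)) - f(x,u(x))) - α(‖x‖)` is bounded below by
`τ = (1/l_f) log((c l_{α⁻¹} l_u + 1)/(c l_{α⁻¹} l_u + l_u/(1+l_u)))`. -/
theorem stmt_7 {d m : ℕ}
    (D : Set (EuclideanSpace ℝ (Fin d))) (hDb : Bornology.IsBounded D)
    (f : EuclideanSpace ℝ (Fin d) → EuclideanSpace ℝ (Fin m) → EuclideanSpace ℝ (Fin d))
    (u : EuclideanSpace ℝ (Fin d) → EuclideanSpace ℝ (Fin m))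
    (V : EuclideanSpace ℝ (Fin d) → ℝ) (hV : ContDiff ℝ 1 V)
    (lf lu c linv : ℝ) (hlf : 0 < lf) (hlu : 0 < lu) (hlinv : 0 < linv)
    (hfLip : ∀ y y' v v', ‖f y' v' - f y v‖ ≤ lf * (‖y' - y‖ + ‖v' - v‖))
    (huLip : ∀ y y', ‖u y' - u y‖ ≤ lu * ‖y' - y‖)
    (hf0 : f 0 (u 0) = 0) (hu0 : u 0 = 0)
    (α γ : ℝ → ℝ) (hα : IsClassK α) (hγ : IsClassK γ)
    -- `c` bounds `max_{x∈D} ‖∇V(x)‖ · l_f`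
    (hc : ∀ y ∈ D, ‖gradient V y‖ * lf ≤ c)
    -- equation-group condition: `∇V·(f(x,u(x+e)) - f(x,u(x))) ≤ γ(‖e‖)` on `D`
    (hgroup : ∀ y ∈ D, ∀ w : EuclideanSpace ℝ (Fin d),
      (inner ℝ (gradient V y) (f y (u (y + w)) - f y (u y)) : ℝ) ≤ γ ‖w‖)
    -- `γ` is the tight estimate: its Lipschitz constant is bounded by `c·l_u`
    (hγtight : ∀ s : ℝ, 0 ≤ s → γ s ≤ c * lu * s)
    -- `α⁻¹` is `l_{α⁻¹}`-Lipschitz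
    (hinv : ∀ s₁ s₂ : ℝ, 0 ≤ s₁ → 0 ≤ s₂ → |s₁ - s₂| ≤ linv * |α s₁ - α s₂|)
    (tk tk1 : ℝ) (htk : tk < tk1)
    (x : ℝ → EuclideanSpace ℝ (Fin d)) (hxtk : x tk ≠ 0)
    (hxD : ∀ t ∈ Icc tk tk1, x t ∈ D)
    (hxode : ∀ t ∈ Icc tk tk1, HasDerivAt x (f (x t) (u (x tk))) t)
    -- before the event, `h̃ < 0`
    (hpre : ∀ t ∈ Ico tk tk1,
      (inner ℝ (gradient V (x t)) (f (x t) (u (x tk)) - f (x t) (u (x t))) : ℝ) < α ‖x t‖)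
    -- the event `h̃ = 0` is triggered at `tk1`
    (htrig : (inner ℝ (gradient V (x tk1)) (f (x tk1) (u (x tk)) - f (x tk1) (u (x tk1))) : ℝ)
        = α ‖x tk1‖) :
    (∀ s : ℝ, 0 ≤ s → γ s ≤ α (c * linv * lu * s)) ∧
    (1 / lf) * Real.log ((c * linv * lu + 1) / (c * linv * lu + lu / (1 + lu)))
      ≤ tk1 - tk := by
  have hxtkD : x tk ∈ D := hxD tk ⟨le_rfl, htk.le⟩
  have hc0 : 0 ≤ c := le_trans (by positivity) (hc (x tk) hxtkD)
  have hα00 : α 0 = 0 := hα.2.2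
  have hαnn : ∀ s : ℝ, 0 ≤ s → 0 ≤ α s := by
    intro s hs
    rcases eq_or_lt_of_le hs with h | h
    · rw [← h, hα00]
    · rw [← hα00]
      exact (hα.2.1 self_mem_Ici (mem_Ici.2 hs) h).le
  have hlin : ∀ s : ℝ, 0 ≤ s → s ≤ linv * α s := by
    intro s hs
    have h := hinv s 0 hs le_rfl
    rw [hα00, sub_zero, sub_zero, abs_of_nonneg hs, abs_of_nonneg (hαnn s hs)] at h
    exact h
  have part1 : ∀ s : ℝ, 0 ≤ s → γ s ≤ α (c * linv * lu * s) := by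
    intro s hs
    have h1 : γ s ≤ c * lu * s := hγtight s hs
    have h2 : c * linv * lu * s ≤ linv * α (c * linv * lu * s) := hlin _ (by positivity)
    nlinarith [hαnn (c * linv * lu * s) (by positivity)]
  refine ⟨part1, ?_⟩
  -- notation
  set a := c * linv * lu with ha
  have ha0 : 0 ≤ a := by rw [ha]; positivity
  set A : ℝ → ℝ := fun t => ‖x tk - x t‖ with hAfun
  set B : ℝ → ℝ := fun t => ‖x t‖ with hBfun
  set w : ℝ → ℝ := fun t => lu * A t + (1 + lu) * B t with hwfun
  set φ : ℝ → ℝ := fun t =>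
    (1 / lf) * (Real.log (A t + B t) - Real.log (w t) + Real.log (1 + lu)) with hφfun
  have hAdef : ∀ t, A t = ‖x tk - x t‖ := fun t => by rw [hAfun]
  have hBdef : ∀ t, B t = ‖x t‖ := fun t => by rw [hBfun]
  have hwdef : ∀ t, w t = lu * A t + (1 + lu) * B t := fun t => by rw [hwfun]
  have hφdef : ∀ t, φ t =
      (1 / lf) * (Real.log (A t + B t) - Real.log (w t) + Real.log (1 + lu)) :=
    fun t => by rw [hφfun]
  have hxtknorm : (0:ℝ) < ‖x tk‖ := norm_pos_iff.mpr hxtk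
  have hlu1 : (0:ℝ) < 1 + lu := by linarith
  -- continuity
  have hxcont : ContinuousOn x (Icc tk tk1) := fun t ht =>
    ((hxode t ht).continuousAt).continuousWithinAt
  have hAcont : ContinuousOn A (Icc tk tk1) := by
    rw [hAfun]; exact (continuousOn_const.sub hxcont).norm
  have hBcont : ContinuousOn B (Icc tk tk1) := by
    rw [hBfun]; exact hxcont.norm
  clear_value a A B
  have hwcont : ContinuousOn w (Icc tk tk1) := by
    rw [hwfun]; exact (continuousOn_const.mul hAcont).add (continuousOn_const.mul hBcont)
  clear_value w
  have hAnn : ∀ t, 0 ≤ A t := fun t => by rw [hAdef]; positivity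
  have hBnn : ∀ t, 0 ≤ B t := fun t => by rw [hBdef]; positivity
  have hABpos : ∀ t, 0 < A t + B t := by
    intro t
    have h1 : x tk - x t + x t = x tk := by abel
    have h2 : ‖x tk‖ ≤ ‖x tk - x t‖ + ‖x t‖ := by
      calc ‖x tk‖ = ‖x tk - x t + x t‖ := by rw [h1]
        _ ≤ ‖x tk - x t‖ + ‖x t‖ := norm_add_le _ _
    rw [hAdef, hBdef]
    linarith
  have hwpos : ∀ t, 0 < w t := by
    intro t
    have h3 := hABpos t
    have h4 := hAnn t
    have h5 := hBnn t
    rw [hwdef]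
    nlinarith
  have hφcont : ContinuousOn φ (Icc tk tk1) := by
    rw [hφfun]
    apply ContinuousOn.mul continuousOn_const
    exact (((hAcont.add hBcont).log fun t _ => (hABpos t).ne').sub
      (hwcont.log fun t _ => (hwpos t).ne')).add continuousOn_const
  clear_value φ
  -- value at tk
  have hAtk : A tk = 0 := by rw [hAdef]; simp
  have hBtk : B tk = ‖x tk‖ := hBdef tk
  have hφtk : φ tk = 0 := by
    have hwtk : w tk = (1 + lu) * B tk := by rw [hwdef, hAtk]; ring
    rw [hφdef tk, hAtk, hwtk, zero_add, hBtk,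
      Real.log_mul hlu1.ne' hxtknorm.ne']
    ring
  -- the slope bound
  have bound : ∀ t₀ ∈ Ico tk tk1, ∀ r : ℝ, (1:ℝ) < r →
      ∃ᶠ z in 𝓝[>] t₀, slope φ t₀ z < r := by
    intro t₀ ht₀ r hr
    have ht₀1 : t₀ < tk1 := ht₀.2
    have ht₀I : t₀ ∈ Icc tk tk1 := ⟨ht₀.1, ht₀1.le⟩
    by_cases hB0 : B t₀ = 0
    · -- at `B = 0` the function φ attains its global maximum, so slopes are ≤ 0
      have hApos : 0 < A t₀ := by have := hABpos t₀; linarith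
      have hφmax : ∀ z : ℝ, φ z ≤ (1 / lf) * Real.log ((1 + lu) / lu) := by
        intro z
        have hkey : Real.log (lu * (A z + B z)) ≤ Real.log (w z) := by
          rw [Real.log_le_log_iff (mul_pos hlu (hABpos z)) (hwpos z), hwdef z]
          nlinarith [hBnn z]
        rw [Real.log_mul hlu.ne' (hABpos z).ne'] at hkey
        rw [hφdef z, Real.log_div hlu1.ne' hlu.ne']
        have h5 : Real.log (A z + B z) - Real.log (w z) + Real.log (1 + lu)
            ≤ Real.log (1 + lu) - Real.log lu := by linarith
        exact mul_le_mul_of_nonneg_left h5 (by positivity)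
      have hφt₀ : φ t₀ = (1 / lf) * Real.log ((1 + lu) / lu) := by
        have hwt₀ : w t₀ = lu * A t₀ := by rw [hwdef, hB0]; ring
        rw [hφdef t₀, hB0, add_zero, hwt₀, Real.log_mul hlu.ne' hApos.ne',
          Real.log_div hlu1.ne' hlu.ne']
        ring
      apply Filter.Eventually.frequently
      filter_upwards [self_mem_nhdsWithin] with z hz
      have hΔ : 0 < z - t₀ := sub_pos.2 hz
      have hnum : φ z - φ t₀ ≤ 0 := by
        have := hφmax z; rw [hφt₀]; linarith
      rw [slope_def_field]
      calc (φ z - φ t₀) / (z - t₀) ≤ 0 := div_nonpos_of_nonpos_of_nonneg hnum hΔ.le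
        _ < r := by linarith
    · -- main case `B t₀ > 0`
      have hBpos : 0 < B t₀ := lt_of_le_of_ne (hBnn t₀) (Ne.symm hB0)
      have hA0 : 0 ≤ A t₀ := hAnn t₀
      have hw0 : 0 < w t₀ := hwpos t₀
      set v := f (x t₀) (u (x tk)) with hv
      have hD : HasDerivAt x v t₀ := hxode t₀ ht₀I
      have hvb : ‖v‖ ≤ lf * w t₀ := by
        have h1 : ‖f (x t₀) (u (x tk)) - f 0 (u 0)‖
            ≤ lf * (‖x t₀ - 0‖ + ‖u (x tk) - u 0‖) := hfLip 0 (x t₀) (u 0) (u (x tk))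
        rw [hf0, sub_zero, sub_zero] at h1
        have h2 : ‖u (x tk) - u 0‖ ≤ lu * ‖x tk - 0‖ := huLip 0 (x tk)
        rw [sub_zero] at h2
        have h3 : ‖x tk‖ ≤ ‖x tk - x t₀‖ + ‖x t₀‖ := by
          have h4 : x tk - x t₀ + x t₀ = x tk := by abel
          calc ‖x tk‖ = ‖x tk - x t₀ + x t₀‖ := by rw [h4]
            _ ≤ ‖x tk - x t₀‖ + ‖x t₀‖ := norm_add_le _ _
        have h6 : ‖v‖ = ‖f (x t₀) (u (x tk))‖ := by rw [hv]
        rw [hwdef t₀, hAdef t₀, hBdef t₀]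
        nlinarith [h1, h3, h6, mul_le_mul_of_nonneg_left h2 hlf.le,
          mul_le_mul_of_nonneg_left h3 (mul_nonneg hlf.le hlu.le)]
      clear_value v
      set θ := min (B t₀) (w t₀ * (r - 1) / (2 * r)) with hθdef
      have hr0 : (0:ℝ) < r := by linarith
      have hθ : 0 < θ := by
        rw [hθdef]
        exact lt_min hBpos (div_pos (mul_pos hw0 (by linarith)) (by linarith))
      have hθ1 : θ ≤ B t₀ := by rw [hθdef]; exact min_le_left _ _
      have hθ2 : θ ≤ w t₀ * (r - 1) / (2 * r) := by rw [hθdef]; exact min_le_right _ _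
      clear_value θ
      set ε := lf * w t₀ * (r - 1) / 2 with hε
      have hεpos : 0 < ε := by
        rw [hε]
        apply div_pos _ (by norm_num)
        exact mul_pos (mul_pos hlf hw0) (by linarith)
      have hεval : lf * w t₀ + ε = lf * w t₀ * (r + 1) / 2 := by rw [hε]; ring
      clear_value ε
      have hlittle : ∀ᶠ z in 𝓝 t₀, ‖x z - x t₀ - (z - t₀) • v‖ ≤ ε * ‖z - t₀‖ :=
        (Asymptotics.isLittleO_iff.mp (hasDerivAt_iff_isLittleO.1 hD)) hεpos
      have hnear : ∀ᶠ z in 𝓝 t₀, ‖x z - x t₀‖ < θ := by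
        have hcx : Continuous (fun y : EuclideanSpace ℝ (Fin d) => ‖y - x t₀‖) :=
          (continuous_id.sub continuous_const).norm
        have h1 : Tendsto (fun z => ‖x z - x t₀‖) (𝓝 t₀) (𝓝 (0:ℝ)) := by
          have h2 : ContinuousAt (fun z => ‖x z - x t₀‖) t₀ :=
            hcx.continuousAt.comp hD.continuousAt
          simpa [ContinuousAt] using h2
        exact h1.eventually (gt_mem_nhds hθ)
      apply Filter.Eventually.frequently
      filter_upwards [self_mem_nhdsWithin, hlittle.filter_mono nhdsWithin_le_nhds,
        hnear.filter_mono nhdsWithin_le_nhds] with z hz hlz hnz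
      have hΔ : 0 < z - t₀ := sub_pos.2 hz
      set M := ‖x z - x t₀‖ with hM
      clear_value M
      have hM0 : 0 ≤ M := by rw [hM]; positivity
      have hm1 : M < B t₀ := lt_of_lt_of_le hnz hθ1
      have hm2 : M < w t₀ * (r - 1) / (2 * r) := lt_of_lt_of_le hnz hθ2
      have hm3 : M ≤ (lf * w t₀ + ε) * (z - t₀) := by
        have h2 : x z - x t₀ = (x z - x t₀ - (z - t₀) • v) + (z - t₀) • v := by abel
        have h1 : M ≤ ‖x z - x t₀ - (z - t₀) • v‖ + ‖(z - t₀) • v‖ := by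
          calc M = ‖(x z - x t₀ - (z - t₀) • v) + (z - t₀) • v‖ := by rw [hM, ← h2]
            _ ≤ _ := norm_add_le _ _
        have h3 : ‖(z - t₀) • v‖ = (z - t₀) * ‖v‖ := by
          rw [norm_smul, Real.norm_eq_abs, abs_of_pos hΔ]
        have h4 : ‖z - t₀‖ = z - t₀ := by rw [Real.norm_eq_abs, abs_of_pos hΔ]
        rw [h4] at hlz
        rw [h3] at h1
        nlinarith [hvb, hΔ, hlz]
      -- the two monotonicity steps
      have hAz : A z ≤ A t₀ + M := by
        have h1 : x tk - x z = (x tk - x t₀) + (x t₀ - x z) := by abel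
        rw [hAdef z, hAdef t₀, hM]
        calc ‖x tk - x z‖ = ‖(x tk - x t₀) + (x t₀ - x z)‖ := by rw [h1]
          _ ≤ ‖x tk - x t₀‖ + ‖x t₀ - x z‖ := norm_add_le _ _
          _ = ‖x tk - x t₀‖ + ‖x z - x t₀‖ := by rw [norm_sub_rev (x t₀)]
      have hBz : B t₀ - M ≤ B z := by
        have h1 := norm_sub_norm_le (x t₀) (x z)
        have h2 : ‖x t₀ - x z‖ = ‖x z - x t₀‖ := norm_sub_rev _ _
        rw [hBdef z, hBdef t₀, hM]
        linarith [h1, h2.le, h2.ge]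
      have step1 : Real.log (A z + B z) - Real.log (lu * A z + (1 + lu) * B z)
          ≤ Real.log ((A t₀ + M) + B z) - Real.log (lu * (A t₀ + M) + (1 + lu) * B z) :=
        phi_mono_A hlu hAz (hBnn z) (hABpos z)
      have step2 : Real.log ((A t₀ + M) + B z) - Real.log (lu * (A t₀ + M) + (1 + lu) * B z)
          ≤ Real.log ((A t₀ + M) + (B t₀ - M))
            - Real.log (lu * (A t₀ + M) + (1 + lu) * (B t₀ - M)) :=
        phi_anti_B hlu (by linarith) (by linarith) hBz (by
          have := hABpos t₀; linarith)
      have hsum : (A t₀ + M) + (B t₀ - M) = A t₀ + B t₀ := by ring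
      have hwm : lu * (A t₀ + M) + (1 + lu) * (B t₀ - M) = w t₀ - M := by
        rw [hwdef t₀]; ring
      have hwmpos : 0 < w t₀ - M := by
        have h1 : M * (2 * r) < w t₀ * (r - 1) := (lt_div_iff₀ (by linarith)).1 hm2
        nlinarith
      -- key estimate on the increment of φ
      have key : φ z - φ t₀ ≤ (1 / lf) * (M / (w t₀ - M)) := by
        have hlog : Real.log (w t₀) - Real.log (w t₀ - M) ≤ M / (w t₀ - M) := by
          have h := Real.log_le_sub_one_of_pos
            (x := w t₀ / (w t₀ - M)) (by positivity)
          rw [Real.log_div hw0.ne' hwmpos.ne'] at h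
          have h2 : w t₀ / (w t₀ - M) - 1 = M / (w t₀ - M) := by field_simp; ring
          linarith
        have hφz : φ z ≤ (1 / lf) *
            (Real.log (A t₀ + B t₀) - Real.log (w t₀ - M) + Real.log (1 + lu)) := by
          rw [hφdef z]
          apply mul_le_mul_of_nonneg_left _ (by positivity)
          have h6 := step1.trans step2
          rw [hsum, hwm] at h6
          rw [hwdef z]
          linarith
        have h8 : (1 / lf) * (Real.log (A t₀ + B t₀) - Real.log (w t₀ - M)
            + Real.log (1 + lu)) - φ t₀
            = (1 / lf) * (Real.log (w t₀) - Real.log (w t₀ - M)) := by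
          rw [hφdef t₀]; ring
        have h9 : (1 / lf) * (Real.log (w t₀) - Real.log (w t₀ - M))
            ≤ (1 / lf) * (M / (w t₀ - M)) :=
          mul_le_mul_of_nonneg_left hlog (by positivity)
        linarith
      -- conclude the slope bound
      have hm5 : 2 * r * M < w t₀ * (r - 1) := by
        have h1 : M * (2 * r) < w t₀ * (r - 1) := (lt_div_iff₀ (by linarith)).1 hm2
        linarith
      have hm6 : M ≤ lf * w t₀ * (r + 1) / 2 * (z - t₀) := by
        calc M ≤ (lf * w t₀ + ε) * (z - t₀) := hm3
          _ = lf * w t₀ * (r + 1) / 2 * (z - t₀) := by rw [hεval]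
      have hmfinal : M < lf * r * (z - t₀) * (w t₀ - M) := by
        nlinarith [mul_lt_mul_of_pos_left hm5 (mul_pos hlf hΔ), hm6,
          mul_pos hlf hΔ, hw0]
      have hslope : (1 / lf) * (M / (w t₀ - M)) < r * (z - t₀) := by
        have h1 : M / (w t₀ - M) < lf * (r * (z - t₀)) := by
          rw [div_lt_iff₀ hwmpos]; nlinarith [hmfinal]
        calc (1 / lf) * (M / (w t₀ - M)) < (1 / lf) * (lf * (r * (z - t₀))) :=
              mul_lt_mul_of_pos_left h1 (by positivity)
          _ = r * (z - t₀) := by field_simp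
      rw [slope_def_field, div_lt_iff₀ hΔ]
      linarith
  -- the fencing theorem
  have fence : φ tk1 ≤ tk1 - tk := by
    have h := image_le_of_liminf_slope_right_le_deriv_boundary (f := φ)
      (a := tk) (b := tk1) hφcont (B := fun t => t - tk) (B' := fun _ => 1)
      (by simp [hφtk]) (continuousOn_id.sub continuousOn_const)
      (fun t _ => (hasDerivWithinAt_id t (Ici t)).sub_const tk) bound
    exact h ⟨htk.le, le_rfl⟩
  -- the event condition at tk1 gives `B tk1 ≤ a * A tk1`
  have hBA : B tk1 ≤ a * A tk1 := by
    have hg := hgroup (x tk1) (hxD tk1 ⟨htk.le, le_rfl⟩) (x tk - x tk1)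
    have hxx : x tk1 + (x tk - x tk1) = x tk := by abel
    rw [hxx, htrig] at hg
    have h2 : γ ‖x tk - x tk1‖ ≤ α (a * ‖x tk - x tk1‖) :=
      part1 _ (norm_nonneg _)
    rw [hAdef, hBdef]
    by_contra hcon
    push_neg at hcon
    have h3 := hα.2.1 (mem_Ici.2 (mul_nonneg ha0 (norm_nonneg (x tk - x tk1))))
      (mem_Ici.2 (norm_nonneg (x tk1))) hcon
    linarith
  -- lower bound on φ tk1
  have hτφ : (1 / lf) * Real.log ((a + 1) / (a + lu / (1 + lu))) ≤ φ tk1 := by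
    have hA1 : 0 ≤ A tk1 := hAnn tk1
    have hB1 : 0 ≤ B tk1 := hBnn tk1
    have hAB1 : 0 < A tk1 + B tk1 := hABpos tk1
    have hw1 : 0 < w tk1 := hwpos tk1
    have hden : 0 < a + lu / (1 + lu) := by positivity
    rw [hφdef tk1]
    apply mul_le_mul_of_nonneg_left _ (by positivity)
    have hrw : Real.log (A tk1 + B tk1) - Real.log (w tk1) + Real.log (1 + lu)
        = Real.log ((1 + lu) * (A tk1 + B tk1) / (w tk1)) := by
      rw [Real.log_div (by positivity) hw1.ne', Real.log_mul hlu1.ne' hAB1.ne']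
      ring
    rw [hrw, Real.log_le_log_iff (by positivity) (by positivity),
      div_le_div_iff₀ hden hw1, hwdef tk1]
    have hsplit : (1 + lu) * (A tk1 + B tk1) * (a + lu / (1 + lu))
        = (A tk1 + B tk1) * (a * (1 + lu) + lu) := by
      field_simp
    rw [hsplit]
    nlinarith [hBA]
  linarith [hτφ, fence]
end

section
/- Let x(t) solve ẋ = f(x, u(x(t_k))) on [t_k, t_{k+1}) where ‖f(x,u)‖ ≤ l_f(‖x‖ + ‖u‖), u is l_u-Lipschitz with u(0) = 0, and f(0, 0) = 0. Then the error e(t) = x(t_k) - x(t) satisfies ‖e(t)‖ ≤ (1 + l_u)l_f · ∫_{t_k}^{t} (‖x(s)‖ + ‖e(s)‖) ds for t ∈ [t_k, t_{k+1}), and hence by Grönwall's inequality ‖e(t)‖ ≤ ‖x(t_k)‖(e^{(1+l_u)l_f(t - t_k)} - 1). -/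
open Set Real intervalIntegral

/-- Error growth bound for the held-control closed loop: with
`‖f(y,v)‖ ≤ l_f(‖y‖+‖v‖)`, `u` `l_u`-Lipschitz, `u(0)=0`, `f(0,0)=0`, the
error `e(t) = x(t_k) - x(t)` satisfies the integral inequality
`‖e(t)‖ ≤ (1+l_u) l_f ∫_{t_k}^t (‖x(s)‖+‖e(s)‖) ds` and hence, by Grönwall,
`‖e(t)‖ ≤ ‖x(t_k)‖ (e^{(1+l_u) l_f (t-t_k)} - 1)`. -/
theorem stmt_19 {d m : ℕ}
    (f : EuclideanSpace ℝ (Fin d) → EuclideanSpace ℝ (Fin m) → EuclideanSpace ℝ (Fin d))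
    (u : EuclideanSpace ℝ (Fin d) → EuclideanSpace ℝ (Fin m))
    (lf lu : ℝ) (hlf : 0 < lf) (hlu : 0 < lu)
    (hfb : ∀ y v, ‖f y v‖ ≤ lf * (‖y‖ + ‖v‖))
    (huLip : ∀ y y', ‖u y' - u y‖ ≤ lu * ‖y' - y‖)
    (hu0 : u 0 = 0) (hf0 : f 0 0 = 0)
    (tk tk1 : ℝ) (htk : tk < tk1)
    (x e : ℝ → EuclideanSpace ℝ (Fin d))
    (hxode : ∀ t ∈ Ico tk tk1, HasDerivAt x (f (x t) (u (x tk))) t)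
    (hx_cont : ContinuousOn x (Ico tk tk1))
    (hedef : ∀ t ∈ Ico tk tk1, e t = x tk - x t) :
    ∀ t ∈ Ico tk tk1,
      ‖e t‖ ≤ (1 + lu) * lf * ∫ s in tk..t, (‖x s‖ + ‖e s‖) ∧
      ‖e t‖ ≤ ‖x tk‖ * (Real.exp ((1 + lu) * lf * (t - tk)) - 1) := by
  intro t ht
  obtain ⟨htl, htr⟩ := ht
  set K : ℝ := (1 + lu) * lf with hK
  have hKpos : 0 < K := by positivity
  have hsub : Icc tk t ⊆ Ico tk tk1 := fun s hs => ⟨hs.1, lt_of_le_of_lt hs.2 htr⟩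
  set g : ℝ → EuclideanSpace ℝ (Fin d) := fun r => x tk - x r with hg
  have hgd : ∀ s ∈ Icc tk t, HasDerivAt g (-(f (x s) (u (x tk)))) s := by
    intro s hs
    simpa using ((hxode s (hsub hs)).const_sub (x tk))
  have hu_bound : ‖u (x tk)‖ ≤ lu * ‖x tk‖ := by
    have := huLip 0 (x tk)
    simpa [hu0] using this
  have hxe : ∀ s, ‖x tk‖ ≤ ‖x s‖ + ‖g s‖ := by
    intro s
    calc ‖x tk‖ = ‖x s + g s‖ := by simp [hg]
    _ ≤ ‖x s‖ + ‖g s‖ := norm_add_le _ _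
  have hd_bound : ∀ s, ‖-(f (x s) (u (x tk)))‖ ≤ K * (‖x s‖ + ‖g s‖) := by
    intro s
    rw [norm_neg]
    calc ‖f (x s) (u (x tk))‖ ≤ lf * (‖x s‖ + ‖u (x tk)‖) := hfb _ _
    _ ≤ lf * (‖x s‖ + lu * ‖x tk‖) := by gcongr
    _ ≤ lf * (‖x s‖ + lu * (‖x s‖ + ‖g s‖)) := by gcongr; exact hxe s
    _ ≤ K * (‖x s‖ + ‖g s‖) := by
        rw [hK]
        nlinarith [mul_nonneg hlf.le (norm_nonneg (g s)),
          mul_nonneg (mul_nonneg hlu.le hlf.le) (norm_nonneg (x s)),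
          mul_nonneg (mul_nonneg hlu.le hlf.le) (norm_nonneg (g s))]
  have hgc : ContinuousOn g (Icc tk t) :=
    continuousOn_const.sub (hx_cont.mono hsub)
  -- continuity / boundedness of x on [tk, t]
  obtain ⟨C, hC⟩ : ∃ C, ∀ s ∈ Icc tk t, ‖x s‖ ≤ C :=
    (isCompact_Icc).exists_bound_of_continuousOn (hx_cont.mono hsub)
  -- the derivative equals `deriv g` on [tk, t]
  have hφeq : ∀ s ∈ Icc tk t, deriv g s = -(f (x s) (u (x tk))) :=
    fun s hs => (hgd s hs).deriv
  -- interval integrability of `deriv g`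
  have hmeas : Measurable (deriv g) := measurable_deriv g
  have hint : IntervalIntegrable (deriv g) MeasureTheory.volume tk t := by
    have hIoc : uIoc tk t ⊆ Icc tk t := by
      rw [uIoc_of_le htl]; exact Ioc_subset_Icc_self
    refine IntervalIntegrable.mono_fun
      (_root_.intervalIntegrable_const (c := K * (C + (‖x tk‖ + C))))
      hmeas.aestronglyMeasurable ?_
    refine (MeasureTheory.ae_restrict_iff' measurableSet_uIoc).2 ?_
    refine MeasureTheory.ae_of_all _ fun s hs => ?_
    have hs' := hIoc hs
    have h1 : ‖deriv g s‖ ≤ K * (‖x s‖ + ‖g s‖) := by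
      rw [hφeq s hs']; exact hd_bound s
    have h2 : ‖g s‖ ≤ ‖x tk‖ + ‖x s‖ := norm_sub_le _ _
    have h3 : ‖x s‖ ≤ C := hC s hs'
    have h5 : ‖x s‖ + ‖g s‖ ≤ C + (‖x tk‖ + C) := by linarith
    have h4 : ‖deriv g s‖ ≤ K * (C + (‖x tk‖ + C)) :=
      h1.trans (mul_le_mul_of_nonneg_left h5 hKpos.le)
    exact h4.trans (le_abs_self _)
  -- FTC: g t = ∫ deriv g
  have hftc : (∫ s in tk..t, deriv g s) = g t := by
    have := intervalIntegral.integral_eq_sub_of_hasDerivAt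
      (f := g) (f' := deriv g) (a := tk) (b := t)
      (fun s hs => by
        rw [uIcc_of_le htl] at hs
        rw [hφeq s hs]; exact hgd s hs) hint
    simpa [hg] using this
  have hegt : e t = g t := hedef t ⟨htl, htr⟩
  have heg : ∀ s ∈ Icc tk t, e s = g s := fun s hs => hedef s (hsub hs)
  constructor
  · -- integral inequality
    have hbint : IntervalIntegrable (fun s => K * (‖x s‖ + ‖g s‖))
        MeasureTheory.volume tk t := by
      apply ContinuousOn.intervalIntegrable
      rw [uIcc_of_le htl]
      exact continuousOn_const.mul
        (((hx_cont.mono hsub).norm).add (hgc.norm))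
    have hnn : 0 ≤ ∫ s in tk..t, K * (‖x s‖ + ‖g s‖) :=
      intervalIntegral.integral_nonneg htl fun s _ => by positivity
    have hnorm : ‖∫ s in tk..t, deriv g s‖ ≤ ∫ s in tk..t, K * (‖x s‖ + ‖g s‖) := by
      have h := intervalIntegral.norm_integral_le_abs_of_norm_le (f := deriv g)
        (g := fun s => K * (‖x s‖ + ‖g s‖)) (a := tk) (b := t) ?_ hbint
      · rwa [abs_of_nonneg hnn] at h
      refine (MeasureTheory.ae_restrict_iff' measurableSet_uIoc).2
        (MeasureTheory.ae_of_all _ fun s hs => ?_)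
      have hs' : s ∈ Icc tk t := by
        rw [uIoc_of_le htl] at hs; exact Ioc_subset_Icc_self hs
      rw [hφeq s hs']; exact hd_bound s
    have hcongr : (∫ s in tk..t, (‖x s‖ + ‖e s‖)) = ∫ s in tk..t, (‖x s‖ + ‖g s‖) := by
      apply intervalIntegral.integral_congr
      intro s hs
      rw [uIcc_of_le htl] at hs
      show ‖x s‖ + ‖e s‖ = ‖x s‖ + ‖g s‖
      rw [heg s hs]
    calc ‖e t‖ = ‖∫ s in tk..t, deriv g s‖ := by rw [hftc, hegt]
    _ ≤ ∫ s in tk..t, K * (‖x s‖ + ‖g s‖) := hnorm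
    _ = K * ∫ s in tk..t, (‖x s‖ + ‖g s‖) := intervalIntegral.integral_const_mul _ _
    _ = (1 + lu) * lf * ∫ s in tk..t, (‖x s‖ + ‖e s‖) := by rw [hcongr, hK]
  · -- Grönwall
    have hbound : ∀ s ∈ Ico tk t, ‖-(f (x s) (u (x tk)))‖ ≤ K * ‖g s‖ + K * ‖x tk‖ := by
      intro s hs
      have h2 : ‖x s‖ ≤ ‖x tk‖ + ‖g s‖ := by
        have hxg : x s = x tk - g s := by simp [hg]
        rw [hxg]; exact norm_sub_le _ _
      rw [norm_neg]
      calc ‖f (x s) (u (x tk))‖ ≤ lf * (‖x s‖ + ‖u (x tk)‖) := hfb _ _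
      _ ≤ lf * (‖x s‖ + lu * ‖x tk‖) := by gcongr
      _ ≤ K * ‖g s‖ + K * ‖x tk‖ := by
          rw [hK]
          nlinarith [mul_le_mul_of_nonneg_left h2 hlf.le,
            mul_nonneg (mul_nonneg hlu.le hlf.le) (norm_nonneg (g s))]
    have hgron := norm_le_gronwallBound_of_norm_deriv_right_le (a := tk) (b := t)
      (δ := 0) (K := K) (ε := K * ‖x tk‖) hgc
      (fun s hs => (hgd s (Ico_subset_Icc_self hs)).hasDerivWithinAt)
      (by simp [hg]) hbound t ⟨htl, le_refl t⟩
    rw [gronwallBound_of_K_ne_0 hKpos.ne'] at hgron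
    rw [hegt]
    calc ‖g t‖ ≤ 0 * Real.exp (K * (t - tk)) + K * ‖x tk‖ / K * (Real.exp (K * (t - tk)) - 1) :=
      hgron
    _ = ‖x tk‖ * (Real.exp ((1 + lu) * lf * (t - tk)) - 1) := by
        rw [hK]; field_simp; ring
end
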